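/- Let a > 0, α > −1, β ≥ 0. Then there exist a constant C > 0 and an index N such that for every bounded uniformly continuous function f : [0,∞) → ℝ and every natural number n ≥ N (with n > β), sup_{x ∈ [0,a]} | M_n^{(α,β)}[f](x) − f(x) | ≤ C · ω(f, n^{−1/2}), where ω(f, δ) = sup { |f(t) − f(s)| : s, t ∈ [0,∞), |t − s| ≤ δ } is the modulus of continuity of f. -/

import Mathlib

open MeasureTheory Real Filter

/-- The Szász–Mirakyan basis functions `ψ_{n,k}(x) = e^{-nx} (nx)^k / k!`. -/
noncomputable def psi (n k : ℕ) (x : ℝ) : ℝ :=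
  Real.exp (-(n * x)) * (n * x) ^ k / (Nat.factorial k)

/-- The Szász–Mirakyan–Laguerre–Durrmeyer operator `M_n^{(α,β)}`. -/
noncomputable def M (α β : ℝ) (n : ℕ) (f : ℝ → ℝ) (x : ℝ) : ℝ :=
  ∑' k : ℕ, (((n : ℝ) - β) ^ ((k : ℝ) + α + 1) / Real.Gamma ((k : ℝ) + α + 1)) *
    (∫ t in Set.Ioi (0 : ℝ), f t * t ^ ((k : ℝ) + α) * Real.exp (-((n : ℝ) - β) * t)) *
    psi n k x

/-- The `r`-th moment `μ_r^{(α,β)}(x) = M_n^{(α,β)}[t ↦ t^r](x)`. -/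
noncomputable def mu (α β : ℝ) (n : ℕ) (r : ℕ) (x : ℝ) : ℝ :=
  M α β n (fun t => t ^ r) x

/-- The modulus of continuity of `f` on `[0,∞)`. -/
noncomputable def omega (f : ℝ → ℝ) (δ : ℝ) : ℝ :=
  sSup {y : ℝ | ∃ s t : ℝ, 0 ≤ s ∧ 0 ≤ t ∧ |t - s| ≤ δ ∧ y = |f t - f s|}

open Set


lemma sum0 (y : ℝ) : ∑' k : ℕ, y ^ k / (Nat.factorial k) = Real.exp y := by
  rw [Real.exp_eq_exp_ℝ, NormedSpace.exp_eq_tsum_div]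

lemma summ0 (y : ℝ) : Summable (fun k : ℕ => y ^ k / (Nat.factorial k)) :=
  Real.summable_pow_div_factorial y

lemma hid1 (y : ℝ) (k : ℕ) :
    ((k + 1 : ℕ) : ℝ) * (y ^ (k + 1) / (Nat.factorial (k + 1))) = y * (y ^ k / (Nat.factorial k)) := by
  rw [Nat.factorial_succ]
  have h1 : (Nat.factorial k : ℝ) ≠ 0 := Nat.cast_ne_zero.mpr (Nat.factorial_ne_zero k)
  have h2 : ((k:ℝ) + 1) ≠ 0 := by positivity
  push_cast
  field_simp
  ring

lemma summ1 (y : ℝ) : Summable (fun k : ℕ => (k : ℝ) * (y ^ k / (Nat.factorial k))) := by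
  rw [← summable_nat_add_iff 1]
  have : (fun k : ℕ => ((k + 1 : ℕ) : ℝ) * (y ^ (k + 1) / (Nat.factorial (k + 1))))
      = fun k : ℕ => y * (y ^ k / (Nat.factorial k)) := funext (hid1 y)
  exact this ▸ (summ0 y).mul_left y

lemma sum1 (y : ℝ) : ∑' k : ℕ, (k : ℝ) * (y ^ k / (Nat.factorial k)) = y * Real.exp y := by
  rw [Summable.tsum_eq_zero_add (summ1 y)]
  simp only [Nat.cast_zero, zero_mul, zero_add]
  calc ∑' k : ℕ, ((k + 1 : ℕ) : ℝ) * (y ^ (k + 1) / (Nat.factorial (k + 1)))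
      = ∑' k : ℕ, y * (y ^ k / (Nat.factorial k)) := tsum_congr (hid1 y)
    _ = y * Real.exp y := by rw [tsum_mul_left, sum0]

lemma hid2 (y : ℝ) (k : ℕ) :
    ((k + 2 : ℕ) : ℝ) * (((k + 2 : ℕ) : ℝ) - 1) * (y ^ (k + 2) / (Nat.factorial (k + 2)))
      = y ^ 2 * (y ^ k / (Nat.factorial k)) := by
  rw [show k + 2 = (k + 1) + 1 from rfl, Nat.factorial_succ, Nat.factorial_succ]
  have h1 : (Nat.factorial k : ℝ) ≠ 0 := Nat.cast_ne_zero.mpr (Nat.factorial_ne_zero k)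
  have h2 : ((k:ℝ) + 1) ≠ 0 := by positivity
  have h3 : ((k:ℝ) + 1 + 1) ≠ 0 := by positivity
  push_cast
  field_simp
  ring

lemma summ2 (y : ℝ) :
    Summable (fun k : ℕ => (k : ℝ) * ((k : ℝ) - 1) * (y ^ k / (Nat.factorial k))) := by
  rw [← summable_nat_add_iff 2]
  have : (fun k : ℕ => ((k + 2 : ℕ) : ℝ) * (((k + 2 : ℕ) : ℝ) - 1) * (y ^ (k + 2) / (Nat.factorial (k + 2))))
      = fun k : ℕ => y ^ 2 * (y ^ k / (Nat.factorial k)) := funext (hid2 y)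
  exact this ▸ (summ0 y).mul_left (y ^ 2)

lemma sum2 (y : ℝ) : ∑' k : ℕ, (k : ℝ) * ((k : ℝ) - 1) * (y ^ k / (Nat.factorial k))
    = y ^ 2 * Real.exp y := by
  set f : ℕ → ℝ := fun k => (k : ℝ) * ((k : ℝ) - 1) * (y ^ k / (Nat.factorial k)) with hf
  have hs1 : Summable (fun k : ℕ => f (k + 1)) := (summable_nat_add_iff 1).mpr (summ2 y)
  have step1 : ∑' k : ℕ, f k = f 0 + ∑' k : ℕ, f (k + 1) := Summable.tsum_eq_zero_add (summ2 y)
  have step2 : ∑' k : ℕ, f (k + 1) = f 1 + ∑' k : ℕ, f (k + 2) := Summable.tsum_eq_zero_add hs1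
  have step3 : ∑' k : ℕ, f (k + 2) = ∑' k : ℕ, y ^ 2 * (y ^ k / (Nat.factorial k)) :=
    tsum_congr (fun k => hid2 y k)
  have h0 : f 0 = 0 := by simp [hf]
  have h1 : f 1 = 0 := by simp [hf]
  rw [step1, step2, step3, h0, h1, tsum_mul_left, sum0]
  ring


lemma Iint {r cc : ℝ} (hr : -1 < r) (hc : 0 < cc) :
    IntegrableOn (fun t : ℝ => t ^ r * Real.exp (-(cc * t))) (Ioi 0) := by
  have h := integrableOn_rpow_mul_exp_neg_mul_rpow (p := 1) hr one_pos hc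
  refine h.congr_fun (fun t ht => ?_) measurableSet_Ioi
  simp only [Real.rpow_one, neg_mul]

lemma Ival {r cc : ℝ} (hr : -1 < r) (hc : 0 < cc) :
    ∫ t in Ioi 0, t ^ r * Real.exp (-(cc * t)) = Real.Gamma (r + 1) / cc ^ (r + 1) := by
  have h := Real.integral_rpow_mul_exp_neg_mul_Ioi (a := r + 1) (r := cc) (by linarith) hc
  rw [show r + 1 - 1 = r by ring] at h
  rw [h, one_div, Real.inv_rpow hc.le, inv_mul_eq_div]


example : True := trivial


lemma ck0 {s cc : ℝ} (hs : 0 < s) (hc : 0 < cc) :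
    cc ^ s / Real.Gamma s * (Real.Gamma s / cc ^ s) = 1 := by
  have h1 : (0:ℝ) < Real.Gamma s := Real.Gamma_pos_of_pos hs
  have h2 : (0:ℝ) < cc ^ s := Real.rpow_pos_of_pos hc s
  field_simp

lemma ck1 {s cc : ℝ} (hs : 0 < s) (hc : 0 < cc) :
    cc ^ s / Real.Gamma s * (Real.Gamma (s + 1) / cc ^ (s + 1)) = s / cc := by
  have h1 : (0:ℝ) < Real.Gamma s := Real.Gamma_pos_of_pos hs
  have h2 : (0:ℝ) < cc ^ s := Real.rpow_pos_of_pos hc s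
  rw [Real.Gamma_add_one hs.ne', Real.rpow_add_one hc.ne' s]
  field_simp

lemma ck2 {s cc : ℝ} (hs : 0 < s) (hc : 0 < cc) :
    cc ^ s / Real.Gamma s * (Real.Gamma (s + 2) / cc ^ (s + 2)) = s * (s + 1) / cc ^ 2 := by
  have h1 : (0:ℝ) < Real.Gamma s := Real.Gamma_pos_of_pos hs
  have h2 : (0:ℝ) < cc ^ s := Real.rpow_pos_of_pos hc s
  have e1 : Real.Gamma (s + 2) = (s + 1) * (s * Real.Gamma s) := by
    rw [show s + 2 = (s + 1) + 1 by ring, Real.Gamma_add_one (by positivity),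
      Real.Gamma_add_one hs.ne']
  have e2 : cc ^ (s + 2) = cc ^ s * cc ^ 2 := by
    rw [show s + 2 = (s + 1) + 1 by ring, Real.rpow_add_one hc.ne', Real.rpow_add_one hc.ne']
    ring
  rw [e1, e2]
  have h3 : (0:ℝ) < cc ^ 2 := by positivity
  field_simp


lemma omega_bdd {f : ℝ → ℝ} {B : ℝ} (hB : ∀ t, 0 ≤ t → |f t| ≤ B) (δ : ℝ) :
    BddAbove {y : ℝ | ∃ s t : ℝ, 0 ≤ s ∧ 0 ≤ t ∧ |t - s| ≤ δ ∧ y = |f t - f s|} := by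
  refine ⟨2 * B, ?_⟩
  rintro y ⟨s, t, hs, ht, -, rfl⟩
  calc |f t - f s| ≤ |f t| + |f s| := abs_sub _ _
    _ ≤ 2 * B := by have := hB t ht; have := hB s hs; linarith

lemma omega_mem {f : ℝ → ℝ} {B : ℝ} (hB : ∀ t, 0 ≤ t → |f t| ≤ B) {δ s t : ℝ}
    (hs : 0 ≤ s) (ht : 0 ≤ t) (hst : |t - s| ≤ δ) : |f t - f s| ≤ omega f δ :=
  le_csSup (omega_bdd hB δ) ⟨s, t, hs, ht, hst, rfl⟩

lemma omega_nonneg {f : ℝ → ℝ} {B : ℝ} (hB : ∀ t, 0 ≤ t → |f t| ≤ B) {δ : ℝ}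
    (hδ : 0 ≤ δ) : 0 ≤ omega f δ := by
  have h := omega_mem hB le_rfl le_rfl (by simpa using hδ : |(0:ℝ) - 0| ≤ δ)
  calc (0:ℝ) = |f 0 - f 0| := by simp
    _ ≤ omega f δ := h

lemma omega_pointwise {f : ℝ → ℝ} {B : ℝ} (hB : ∀ t, 0 ≤ t → |f t| ≤ B) {δ : ℝ}
    (hδ : 0 < δ) {s t : ℝ} (hs : 0 ≤ s) (ht : 0 ≤ t) :
    |f t - f s| ≤ (2 + (t - s) ^ 2 / δ ^ 2) * omega f δ := by
  set m : ℕ := max 1 ⌈|t - s| / δ⌉₊ with hm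
  have hm1 : 1 ≤ m := le_max_left _ _
  have hm0 : (0:ℝ) < m := by exact_mod_cast hm1
  have hω := omega_nonneg hB hδ.le
  -- the chain points
  set u : ℕ → ℝ := fun i => s + i * ((t - s) / m) with hu
  have hu0 : u 0 = s := by simp [hu]
  have hum : u m = t := by rw [hu]; field_simp; ring
  have hunn : ∀ i : ℕ, i ≤ m → 0 ≤ u i := by
    intro i hi
    have hi' : (i:ℝ) ≤ m := by exact_mod_cast hi
    have key : 0 ≤ (s * ((m:ℝ) - i) + t * i) / m :=
      div_nonneg (add_nonneg (mul_nonneg hs (by linarith)) (mul_nonneg ht (by positivity))) hm0.le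
    have : u i = (s * ((m:ℝ) - i) + t * i) / m := by
      rw [hu]; field_simp; ring
    rw [this]; exact key
  have hstep : ∀ i : ℕ, i < m → |f (u (i + 1)) - f (u i)| ≤ omega f δ := by
    intro i hi
    have hdiff : |u (i + 1) - u i| ≤ δ := by
      have : u (i + 1) - u i = (t - s) / m := by rw [hu]; push_cast; ring
      rw [this, abs_div, abs_of_pos hm0]
      rw [div_le_iff₀ hm0]
      have h1 : |t - s| / δ ≤ ⌈|t - s| / δ⌉₊ := Nat.le_ceil _
      have h2 : (⌈|t - s| / δ⌉₊ : ℝ) ≤ m := by exact_mod_cast le_max_right 1 _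
      rw [div_le_iff₀ hδ] at h1
      calc |t - s| ≤ δ * ⌈|t - s| / δ⌉₊ := by linarith
        _ ≤ δ * m := by nlinarith
    exact omega_mem hB (hunn i hi.le) (hunn (i + 1) hi) hdiff
  have htel : f t - f s = ∑ i ∈ Finset.range m, (f (u (i + 1)) - f (u i)) := by
    rw [Finset.sum_range_sub (fun i => f (u i)) m, hu0, hum]
  have hchain : |f t - f s| ≤ m * omega f δ := by
    rw [htel]
    calc |∑ i ∈ Finset.range m, (f (u (i + 1)) - f (u i))|
        ≤ ∑ i ∈ Finset.range m, |f (u (i + 1)) - f (u i)| := Finset.abs_sum_le_sum_abs _ _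
      _ ≤ ∑ _i ∈ Finset.range m, omega f δ := Finset.sum_le_sum (fun i hi => hstep i (Finset.mem_range.mp hi))
      _ = m * omega f δ := by rw [Finset.sum_const, Finset.card_range, nsmul_eq_mul]
  have hmle : (m:ℝ) ≤ 2 + (t - s) ^ 2 / δ ^ 2 := by
    set r : ℝ := |t - s| / δ with hr
    have hr0 : 0 ≤ r := by positivity
    have hceil : (⌈r⌉₊ : ℝ) < r + 1 := Nat.ceil_lt_add_one hr0
    have hcast : (m:ℝ) = max 1 (⌈r⌉₊ : ℝ) := by
      rw [hm]; exact_mod_cast Nat.cast_max ..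
    have hmax : (m:ℝ) ≤ r + 1 := by
      rw [hcast]; exact max_le (by linarith) (by linarith)
    have hrsq : r ^ 2 = (t - s) ^ 2 / δ ^ 2 := by
      rw [hr, div_pow, sq_abs]
    nlinarith
  calc |f t - f s| ≤ m * omega f δ := hchain
    _ ≤ (2 + (t - s) ^ 2 / δ ^ 2) * omega f δ := mul_le_mul_of_nonneg_right hmle hω


lemma perk (α c x ω δ B : ℝ) (f : ℝ → ℝ) (hα : -1 < α) (hc : 0 < c) (hx : 0 ≤ x)
    (hδ : 0 < δ) (hB : ∀ t, 0 ≤ t → |f t| ≤ B)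
    (hfm : AEStronglyMeasurable f (volume.restrict (Ioi 0)))
    (hω : ω = omega f δ) (k : ℕ) :
    |c ^ ((k:ℝ) + α + 1) / Real.Gamma ((k:ℝ) + α + 1) *
        (∫ t in Ioi (0:ℝ), f t * t ^ ((k:ℝ) + α) * Real.exp (-c * t)) - f x|
      ≤ ω * (2 + (1 / δ ^ 2) *
        (((k:ℝ) + α + 1) * (((k:ℝ) + α + 1) + 1) / c ^ 2 - 2 * x * (((k:ℝ) + α + 1) / c) + x ^ 2)) := by
  have hk0 : (0:ℝ) ≤ (k:ℝ) := Nat.cast_nonneg k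
  have hκ : (-1:ℝ) < (k:ℝ) + α := by linarith
  have hκ1 : (-1:ℝ) < (k:ℝ) + α + 1 := by linarith
  have hκ2 : (-1:ℝ) < (k:ℝ) + α + 2 := by linarith
  have hsk : (0:ℝ) < (k:ℝ) + α + 1 := by linarith
  have hΓ : (0:ℝ) < Real.Gamma ((k:ℝ) + α + 1) := Real.Gamma_pos_of_pos hsk
  have hcp : (0:ℝ) < c ^ ((k:ℝ) + α + 1) := Real.rpow_pos_of_pos hc _
  set CK : ℝ := c ^ ((k:ℝ) + α + 1) / Real.Gamma ((k:ℝ) + α + 1) with hCK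
  have hCKpos : 0 < CK := div_pos hcp hΓ
  -- integrabilities
  have hg0_int := Iint hκ hc
  have hg1_int := Iint hκ1 hc
  have hg2_int := Iint hκ2 hc
  have hωnn : 0 ≤ ω := hω ▸ omega_nonneg hB hδ.le
  have hfg_int : IntegrableOn (fun t : ℝ => f t * (t ^ ((k:ℝ) + α) * Real.exp (-(c * t)))) (Ioi 0) := by
    refine Integrable.bdd_mul (c := B) hg0_int hfm ?_
    refine (ae_restrict_iff' measurableSet_Ioi).mpr (ae_of_all _ (fun t ht => ?_))
    rw [Real.norm_eq_abs]
    exact hB t (le_of_lt ht)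
  -- quadratic expansion
  have hexpand : ∀ t ∈ Ioi (0:ℝ),
      t ^ ((k:ℝ) + α + 2) * Real.exp (-(c * t)) - 2 * x * (t ^ ((k:ℝ) + α + 1) * Real.exp (-(c * t)))
        + x ^ 2 * (t ^ ((k:ℝ) + α) * Real.exp (-(c * t)))
      = (t - x) ^ 2 * (t ^ ((k:ℝ) + α) * Real.exp (-(c * t))) := by
    intro t ht
    have ht0 : t ≠ 0 := ne_of_gt ht
    have h1 : t ^ ((k:ℝ) + α + 1) = t ^ ((k:ℝ) + α) * t := Real.rpow_add_one ht0 _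
    have h2 : t ^ ((k:ℝ) + α + 2) = t ^ ((k:ℝ) + α) * t * t := by
      rw [show (k:ℝ) + α + 2 = ((k:ℝ) + α + 1) + 1 by ring, Real.rpow_add_one ht0, h1]
    rw [h1, h2]; ring
  have hi1 : IntegrableOn (fun t : ℝ => 2 * x * (t ^ ((k:ℝ) + α + 1) * Real.exp (-(c * t)))) (Ioi 0) :=
    hg1_int.const_mul (2 * x)
  have hi0 : IntegrableOn (fun t : ℝ => x ^ 2 * (t ^ ((k:ℝ) + α) * Real.exp (-(c * t)))) (Ioi 0) :=
    hg0_int.const_mul (x ^ 2)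
  have hi21 : IntegrableOn (fun t : ℝ => t ^ ((k:ℝ) + α + 2) * Real.exp (-(c * t))
      - 2 * x * (t ^ ((k:ℝ) + α + 1) * Real.exp (-(c * t)))) (Ioi 0) := hg2_int.sub hi1
  have hbase : IntegrableOn (fun t : ℝ => t ^ ((k:ℝ) + α + 2) * Real.exp (-(c * t))
      - 2 * x * (t ^ ((k:ℝ) + α + 1) * Real.exp (-(c * t)))
      + x ^ 2 * (t ^ ((k:ℝ) + α) * Real.exp (-(c * t)))) (Ioi 0) := hi21.add hi0
  have hquad_int : IntegrableOn (fun t : ℝ => (t - x) ^ 2 * (t ^ ((k:ℝ) + α) * Real.exp (-(c * t)))) (Ioi 0) :=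
    hbase.congr_fun hexpand measurableSet_Ioi
  -- value of the quadratic integral
  have hJ_val : ∫ t in Ioi (0:ℝ), (t - x) ^ 2 * (t ^ ((k:ℝ) + α) * Real.exp (-(c * t)))
      = (∫ t in Ioi (0:ℝ), t ^ ((k:ℝ) + α + 2) * Real.exp (-(c * t)))
        - 2 * x * (∫ t in Ioi (0:ℝ), t ^ ((k:ℝ) + α + 1) * Real.exp (-(c * t)))
        + x ^ 2 * (∫ t in Ioi (0:ℝ), t ^ ((k:ℝ) + α) * Real.exp (-(c * t))) := by
    have e : ∫ t in Ioi (0:ℝ), (t ^ ((k:ℝ) + α + 2) * Real.exp (-(c * t))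
        - 2 * x * (t ^ ((k:ℝ) + α + 1) * Real.exp (-(c * t)))
        + x ^ 2 * (t ^ ((k:ℝ) + α) * Real.exp (-(c * t))))
        = ∫ t in Ioi (0:ℝ), (t - x) ^ 2 * (t ^ ((k:ℝ) + α) * Real.exp (-(c * t))) :=
      setIntegral_congr_fun measurableSet_Ioi hexpand
    rw [← e, integral_add hi21 hi0, integral_sub hg2_int hi1, integral_const_mul, integral_const_mul]
  -- ck identities
  have hck0 : CK * (∫ t in Ioi (0:ℝ), t ^ ((k:ℝ) + α) * Real.exp (-(c * t))) = 1 := by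
    rw [Ival hκ hc]; exact ck0 hsk hc
  have hck1 : CK * (∫ t in Ioi (0:ℝ), t ^ ((k:ℝ) + α + 1) * Real.exp (-(c * t))) = ((k:ℝ) + α + 1) / c := by
    rw [Ival hκ1 hc]; exact ck1 hsk hc
  have hck2 : CK * (∫ t in Ioi (0:ℝ), t ^ ((k:ℝ) + α + 2) * Real.exp (-(c * t)))
      = ((k:ℝ) + α + 1) * (((k:ℝ) + α + 1) + 1) / c ^ 2 := by
    rw [Ival hκ2 hc, show (k:ℝ) + α + 2 + 1 = ((k:ℝ) + α + 1) + 2 by ring]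
    exact ck2 hsk hc
  have hckJ : CK * (∫ t in Ioi (0:ℝ), (t - x) ^ 2 * (t ^ ((k:ℝ) + α) * Real.exp (-(c * t))))
      = ((k:ℝ) + α + 1) * (((k:ℝ) + α + 1) + 1) / c ^ 2 - 2 * x * (((k:ℝ) + α + 1) / c) + x ^ 2 := by
    rw [hJ_val]
    calc CK * ((∫ t in Ioi (0:ℝ), t ^ ((k:ℝ) + α + 2) * Real.exp (-(c * t)))
          - 2 * x * (∫ t in Ioi (0:ℝ), t ^ ((k:ℝ) + α + 1) * Real.exp (-(c * t)))
          + x ^ 2 * (∫ t in Ioi (0:ℝ), t ^ ((k:ℝ) + α) * Real.exp (-(c * t))))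
        = CK * (∫ t in Ioi (0:ℝ), t ^ ((k:ℝ) + α + 2) * Real.exp (-(c * t)))
          - 2 * x * (CK * (∫ t in Ioi (0:ℝ), t ^ ((k:ℝ) + α + 1) * Real.exp (-(c * t))))
          + x ^ 2 * (CK * (∫ t in Ioi (0:ℝ), t ^ ((k:ℝ) + α) * Real.exp (-(c * t)))) := by ring
      _ = ((k:ℝ) + α + 1) * (((k:ℝ) + α + 1) + 1) / c ^ 2 - 2 * x * (((k:ℝ) + α + 1) / c)
          + x ^ 2 * 1 := by rw [hck0, hck1, hck2]
      _ = _ := by ring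
  -- rewrite the f-integral
  have hIconv : (∫ t in Ioi (0:ℝ), f t * t ^ ((k:ℝ) + α) * Real.exp (-c * t))
      = ∫ t in Ioi (0:ℝ), f t * (t ^ ((k:ℝ) + α) * Real.exp (-(c * t))) := by
    simp only [neg_mul, mul_assoc]
  have hsplit : (∫ t in Ioi (0:ℝ), f t * t ^ ((k:ℝ) + α) * Real.exp (-c * t))
      - f x * (∫ t in Ioi (0:ℝ), t ^ ((k:ℝ) + α) * Real.exp (-(c * t)))
      = ∫ t in Ioi (0:ℝ), (f t - f x) * (t ^ ((k:ℝ) + α) * Real.exp (-(c * t))) := by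
    have hfx0 : IntegrableOn (fun t : ℝ => f x * (t ^ ((k:ℝ) + α) * Real.exp (-(c * t)))) (Ioi 0) :=
      hg0_int.const_mul (f x)
    rw [hIconv, ← integral_const_mul, ← integral_sub hfg_int hfx0]
    exact (setIntegral_congr_fun measurableSet_Ioi (fun t _ => by ring)).symm
  have hsub_int : IntegrableOn (fun t : ℝ => (f t - f x) * (t ^ ((k:ℝ) + α) * Real.exp (-(c * t)))) (Ioi 0) := by
    have h1 : IntegrableOn (fun t : ℝ => f t * (t ^ ((k:ℝ) + α) * Real.exp (-(c * t)))
        - f x * (t ^ ((k:ℝ) + α) * Real.exp (-(c * t)))) (Ioi 0) :=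
      hfg_int.sub (hg0_int.const_mul (f x))
    exact h1.congr_fun (fun t _ => by ring) measurableSet_Ioi
  -- pointwise estimate and integral bound
  have hg0nn : ∀ t ∈ Ioi (0:ℝ), 0 ≤ t ^ ((k:ℝ) + α) * Real.exp (-(c * t)) := fun t ht =>
    mul_nonneg (Real.rpow_nonneg (le_of_lt ht) _) (Real.exp_pos _).le
  have habs : |∫ t in Ioi (0:ℝ), (f t - f x) * (t ^ ((k:ℝ) + α) * Real.exp (-(c * t)))|
      ≤ 2 * ω * (∫ t in Ioi (0:ℝ), t ^ ((k:ℝ) + α) * Real.exp (-(c * t)))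
        + (ω / δ ^ 2) * (∫ t in Ioi (0:ℝ), (t - x) ^ 2 * (t ^ ((k:ℝ) + α) * Real.exp (-(c * t)))) := by
    have step1 : |∫ t in Ioi (0:ℝ), (f t - f x) * (t ^ ((k:ℝ) + α) * Real.exp (-(c * t)))|
        ≤ ∫ t in Ioi (0:ℝ), |(f t - f x) * (t ^ ((k:ℝ) + α) * Real.exp (-(c * t)))| := by
      simpa only [Real.norm_eq_abs] using
        norm_integral_le_integral_norm (μ := volume.restrict (Ioi 0))
          (fun t => (f t - f x) * (t ^ ((k:ℝ) + α) * Real.exp (-(c * t))))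
    have step2 : ∫ t in Ioi (0:ℝ), |(f t - f x) * (t ^ ((k:ℝ) + α) * Real.exp (-(c * t)))|
        ≤ ∫ t in Ioi (0:ℝ), (2 * ω * (t ^ ((k:ℝ) + α) * Real.exp (-(c * t)))
            + (ω / δ ^ 2) * ((t - x) ^ 2 * (t ^ ((k:ℝ) + α) * Real.exp (-(c * t))))) := by
      refine setIntegral_mono_on hsub_int.abs
        (((hg0_int.const_mul (2 * ω)).add (hquad_int.const_mul (ω / δ ^ 2)))) measurableSet_Ioi
        (fun t ht => ?_)
      have h1 : |f t - f x| ≤ (2 + (t - x) ^ 2 / δ ^ 2) * ω := by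
        rw [hω]; exact omega_pointwise hB hδ hx (le_of_lt ht)
      have h2 := hg0nn t ht
      calc |(f t - f x) * (t ^ ((k:ℝ) + α) * Real.exp (-(c * t)))|
          = |f t - f x| * (t ^ ((k:ℝ) + α) * Real.exp (-(c * t))) := by
            rw [abs_mul, abs_of_nonneg h2]
        _ ≤ ((2 + (t - x) ^ 2 / δ ^ 2) * ω) * (t ^ ((k:ℝ) + α) * Real.exp (-(c * t))) :=
            mul_le_mul_of_nonneg_right h1 h2
        _ = 2 * ω * (t ^ ((k:ℝ) + α) * Real.exp (-(c * t)))
            + (ω / δ ^ 2) * ((t - x) ^ 2 * (t ^ ((k:ℝ) + α) * Real.exp (-(c * t)))) := by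
            field_simp
    have step3 : ∫ t in Ioi (0:ℝ), (2 * ω * (t ^ ((k:ℝ) + α) * Real.exp (-(c * t)))
            + (ω / δ ^ 2) * ((t - x) ^ 2 * (t ^ ((k:ℝ) + α) * Real.exp (-(c * t)))))
        = 2 * ω * (∫ t in Ioi (0:ℝ), t ^ ((k:ℝ) + α) * Real.exp (-(c * t)))
          + (ω / δ ^ 2) * (∫ t in Ioi (0:ℝ), (t - x) ^ 2 * (t ^ ((k:ℝ) + α) * Real.exp (-(c * t)))) := by
      rw [integral_add (hg0_int.const_mul (2 * ω)) (hquad_int.const_mul (ω / δ ^ 2)),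
        integral_const_mul, integral_const_mul]
    linarith [step1, step2, step3.le, step3.ge]
  -- assemble
  have hfx : f x = CK * (f x * (∫ t in Ioi (0:ℝ), t ^ ((k:ℝ) + α) * Real.exp (-(c * t)))) := by
    rw [show CK * (f x * (∫ t in Ioi (0:ℝ), t ^ ((k:ℝ) + α) * Real.exp (-(c * t))))
        = f x * (CK * (∫ t in Ioi (0:ℝ), t ^ ((k:ℝ) + α) * Real.exp (-(c * t)))) by ring, hck0, mul_one]
  have hdiff : CK * (∫ t in Ioi (0:ℝ), f t * t ^ ((k:ℝ) + α) * Real.exp (-c * t)) - f x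
      = CK * ((∫ t in Ioi (0:ℝ), f t * t ^ ((k:ℝ) + α) * Real.exp (-c * t))
        - f x * (∫ t in Ioi (0:ℝ), t ^ ((k:ℝ) + α) * Real.exp (-(c * t)))) := by
    linear_combination -hfx
  calc |CK * (∫ t in Ioi (0:ℝ), f t * t ^ ((k:ℝ) + α) * Real.exp (-c * t)) - f x|
      = CK * |(∫ t in Ioi (0:ℝ), f t * t ^ ((k:ℝ) + α) * Real.exp (-c * t))
          - f x * (∫ t in Ioi (0:ℝ), t ^ ((k:ℝ) + α) * Real.exp (-(c * t)))| := by
        rw [hdiff, abs_mul, abs_of_pos hCKpos]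
    _ ≤ CK * (2 * ω * (∫ t in Ioi (0:ℝ), t ^ ((k:ℝ) + α) * Real.exp (-(c * t)))
          + (ω / δ ^ 2) * (∫ t in Ioi (0:ℝ), (t - x) ^ 2 * (t ^ ((k:ℝ) + α) * Real.exp (-(c * t))))) := by
        refine mul_le_mul_of_nonneg_left ?_ hCKpos.le
        rw [hsplit]
        exact habs
    _ = 2 * ω * (CK * (∫ t in Ioi (0:ℝ), t ^ ((k:ℝ) + α) * Real.exp (-(c * t))))
        + (ω / δ ^ 2) * (CK * (∫ t in Ioi (0:ℝ), (t - x) ^ 2 * (t ^ ((k:ℝ) + α) * Real.exp (-(c * t))))) := by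
        ring
    _ = ω * (2 + (1 / δ ^ 2) *
        (((k:ℝ) + α + 1) * (((k:ℝ) + α + 1) + 1) / c ^ 2 - 2 * x * (((k:ℝ) + α + 1) / c) + x ^ 2)) := by
        rw [hck0, hckJ]
        ring


lemma psi_summ (y : ℝ) : Summable (fun k : ℕ => Real.exp (-y) * y ^ k / (Nat.factorial k)) := by
  have h : (fun k : ℕ => Real.exp (-y) * y ^ k / (Nat.factorial k))
      = fun k : ℕ => Real.exp (-y) * (y ^ k / (Nat.factorial k)) :=
    funext fun k => mul_div_assoc _ _ _
  rw [h]
  exact (summ0 y).mul_left _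

lemma psi_tsum (y : ℝ) : ∑' k : ℕ, Real.exp (-y) * y ^ k / (Nat.factorial k) = 1 := by
  have h : ∀ k : ℕ, Real.exp (-y) * y ^ k / (Nat.factorial k)
      = Real.exp (-y) * (y ^ k / (Nat.factorial k)) := fun k => mul_div_assoc _ _ _
  rw [tsum_congr h, tsum_mul_left, sum0, ← Real.exp_add]
  simp

lemma T_poly (α c x : ℝ) (hc : c ≠ 0) (k : ℕ) :
    ((k:ℝ) + α + 1) * (((k:ℝ) + α + 1) + 1) / c ^ 2 - 2 * x * (((k:ℝ) + α + 1) / c) + x ^ 2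
      = (1 / c ^ 2) * ((k:ℝ) * ((k:ℝ) - 1)) + ((2 * α + 4) / c ^ 2 - 2 * x / c) * (k:ℝ)
        + ((α + 1) * (α + 2) / c ^ 2 - 2 * x * (α + 1) / c + x ^ 2) := by
  field_simp
  ring

lemma Tpsi_fun (α c x y : ℝ) (hc : c ≠ 0) :
    (fun k : ℕ => (((k:ℝ) + α + 1) * (((k:ℝ) + α + 1) + 1) / c ^ 2
        - 2 * x * (((k:ℝ) + α + 1) / c) + x ^ 2) * (Real.exp (-y) * y ^ k / (Nat.factorial k)))
      = fun k : ℕ => Real.exp (-y) *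
        ((1 / c ^ 2) * ((k:ℝ) * ((k:ℝ) - 1) * (y ^ k / (Nat.factorial k)))
          + ((2 * α + 4) / c ^ 2 - 2 * x / c) * ((k:ℝ) * (y ^ k / (Nat.factorial k)))
          + ((α + 1) * (α + 2) / c ^ 2 - 2 * x * (α + 1) / c + x ^ 2) * (y ^ k / (Nat.factorial k))) := by
  funext k
  rw [T_poly α c x hc k]
  ring

lemma Tpsi_summ (α c x y : ℝ) (hc : c ≠ 0) :
    Summable (fun k : ℕ => (((k:ℝ) + α + 1) * (((k:ℝ) + α + 1) + 1) / c ^ 2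
        - 2 * x * (((k:ℝ) + α + 1) / c) + x ^ 2) * (Real.exp (-y) * y ^ k / (Nat.factorial k))) := by
  rw [Tpsi_fun α c x y hc]
  exact ((((summ2 y).mul_left _).add ((summ1 y).mul_left _)).add ((summ0 y).mul_left _)).mul_left _

lemma Tpsi_tsum (α c x y : ℝ) (hc : c ≠ 0) :
    ∑' k : ℕ, (((k:ℝ) + α + 1) * (((k:ℝ) + α + 1) + 1) / c ^ 2
        - 2 * x * (((k:ℝ) + α + 1) / c) + x ^ 2) * (Real.exp (-y) * y ^ k / (Nat.factorial k))
      = (1 / c ^ 2) * y ^ 2 + ((2 * α + 4) / c ^ 2 - 2 * x / c) * y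
        + ((α + 1) * (α + 2) / c ^ 2 - 2 * x * (α + 1) / c + x ^ 2) := by
  rw [Tpsi_fun α c x y hc, tsum_mul_left,
    Summable.tsum_add (((summ2 y).mul_left _).add ((summ1 y).mul_left _)) ((summ0 y).mul_left _),
    Summable.tsum_add ((summ2 y).mul_left _) ((summ1 y).mul_left _),
    tsum_mul_left, tsum_mul_left, tsum_mul_left, sum2, sum1, sum0]
  have hh : Real.exp (-y) * Real.exp y = 1 := by rw [← Real.exp_add]; simp
  have expand : Real.exp (-y) * ((1 / c ^ 2) * (y ^ 2 * Real.exp y)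
      + ((2 * α + 4) / c ^ 2 - 2 * x / c) * (y * Real.exp y)
      + ((α + 1) * (α + 2) / c ^ 2 - 2 * x * (α + 1) / c + x ^ 2) * Real.exp y)
      = (Real.exp (-y) * Real.exp y) * ((1 / c ^ 2) * y ^ 2
        + ((2 * α + 4) / c ^ 2 - 2 * x / c) * y
        + ((α + 1) * (α + 2) / c ^ 2 - 2 * x * (α + 1) / c + x ^ 2)) := by ring
  rw [expand, hh, one_mul]


lemma key (α β : ℝ) (hα : -1 < α) (f : ℝ → ℝ) (B : ℝ)
    (hB : ∀ t, 0 ≤ t → |f t| ≤ B)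
    (hfm : AEStronglyMeasurable f (volume.restrict (Ioi 0)))
    (n : ℕ) (hn1 : 1 ≤ (n:ℝ)) (hβn : β < n) (x : ℝ) (hx : 0 ≤ x) :
    |M α β n f x - f x| ≤
      (2 + (n:ℝ) * ((1 / ((n:ℝ) - β) ^ 2) * ((n:ℝ) * x) ^ 2
        + ((2 * α + 4) / ((n:ℝ) - β) ^ 2 - 2 * x / ((n:ℝ) - β)) * ((n:ℝ) * x)
        + ((α + 1) * (α + 2) / ((n:ℝ) - β) ^ 2 - 2 * x * (α + 1) / ((n:ℝ) - β) + x ^ 2)))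
      * omega f ((n:ℝ) ^ (-(1:ℝ) / 2)) := by
  have hn0 : (0:ℝ) < n := by linarith
  have hc : (0:ℝ) < (n:ℝ) - β := sub_pos.mpr hβn
  have hδ : (0:ℝ) < (n:ℝ) ^ (-(1:ℝ) / 2) := Real.rpow_pos_of_pos hn0 _
  have hδ2 : 1 / ((n:ℝ) ^ (-(1:ℝ) / 2)) ^ 2 = (n:ℝ) := by
    have he : (-(1:ℝ) / 2 + -(1:ℝ) / 2) = -1 := by norm_num
    rw [sq, ← Real.rpow_add hn0, he, Real.rpow_neg_one, one_div, inv_inv]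
  set ω := omega f ((n:ℝ) ^ (-(1:ℝ) / 2)) with hωdef
  have hωnn : 0 ≤ ω := hωdef ▸ omega_nonneg hB hδ.le
  set ψ : ℕ → ℝ := fun k => psi n k x with hψdef
  set A : ℕ → ℝ := fun k => ((n:ℝ) - β) ^ ((k:ℝ) + α + 1) / Real.Gamma ((k:ℝ) + α + 1) *
    (∫ t in Ioi (0:ℝ), f t * t ^ ((k:ℝ) + α) * Real.exp (-((n:ℝ) - β) * t)) with hAdef
  set T : ℕ → ℝ := fun k => ((k:ℝ) + α + 1) * (((k:ℝ) + α + 1) + 1) / ((n:ℝ) - β) ^ 2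
    - 2 * x * (((k:ℝ) + α + 1) / ((n:ℝ) - β)) + x ^ 2 with hTdef
  have hM : M α β n f x = ∑' k : ℕ, A k * ψ k := rfl
  have hψ_eq : ψ = fun k : ℕ => Real.exp (-((n:ℝ) * x)) * ((n:ℝ) * x) ^ k / (Nat.factorial k) := by
    funext k; rw [hψdef]; rfl
  have hψ_sum : Summable ψ := by rw [hψ_eq]; exact psi_summ _
  have hψ_tsum : ∑' k, ψ k = 1 := by simp only [hψ_eq]; exact psi_tsum _
  have hψ_nonneg : ∀ k, 0 ≤ ψ k := by
    intro k
    simp only [hψ_eq]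
    have h1 : 0 ≤ (n:ℝ) * x := by positivity
    positivity
  have hTψ_sum : Summable (fun k => T k * ψ k) := by
    simp only [hψ_eq, hTdef]
    exact Tpsi_summ α ((n:ℝ) - β) x ((n:ℝ) * x) hc.ne'
  have hTψ_tsum : ∑' k, T k * ψ k
      = (1 / ((n:ℝ) - β) ^ 2) * ((n:ℝ) * x) ^ 2
        + ((2 * α + 4) / ((n:ℝ) - β) ^ 2 - 2 * x / ((n:ℝ) - β)) * ((n:ℝ) * x)
        + ((α + 1) * (α + 2) / ((n:ℝ) - β) ^ 2 - 2 * x * (α + 1) / ((n:ℝ) - β) + x ^ 2) := by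
    simp only [hψ_eq, hTdef]
    exact Tpsi_tsum α ((n:ℝ) - β) x ((n:ℝ) * x) hc.ne'
  have hperk : ∀ k : ℕ, |A k - f x| ≤ ω * (2 + (n:ℝ) * T k) := by
    intro k
    have h := perk α ((n:ℝ) - β) x ω ((n:ℝ) ^ (-(1:ℝ) / 2)) B f hα hc hx hδ hB hfm hωdef k
    rw [hδ2] at h
    exact h
  have hbound : ∀ k, |A k * ψ k - f x * ψ k| ≤ ω * (2 + (n:ℝ) * T k) * ψ k := by
    intro k
    rw [← sub_mul, abs_mul, abs_of_nonneg (hψ_nonneg k)]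
    exact mul_le_mul_of_nonneg_right (hperk k) (hψ_nonneg k)
  have hbnd_fun : (fun k => ω * (2 + (n:ℝ) * T k) * ψ k)
      = fun k => 2 * ω * ψ k + (ω * n) * (T k * ψ k) := by funext k; ring
  have hbnd_sum : Summable (fun k => ω * (2 + (n:ℝ) * T k) * ψ k) := by
    rw [hbnd_fun]
    exact (hψ_sum.mul_left (2 * ω)).add (hTψ_sum.mul_left (ω * n))
  have hDabs_sum : Summable (fun k => |A k * ψ k - f x * ψ k|) :=
    Summable.of_nonneg_of_le (fun k => abs_nonneg _) hbound hbnd_sum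
  have hD_sum : Summable (fun k => A k * ψ k - f x * ψ k) := hDabs_sum.of_abs
  have hfψ_sum : Summable (fun k => f x * ψ k) := hψ_sum.mul_left _
  have hAψ_sum : Summable (fun k => A k * ψ k) := by
    have h := hD_sum.add hfψ_sum
    have he : (fun k => (A k * ψ k - f x * ψ k) + f x * ψ k) = fun k => A k * ψ k := by
      funext k; ring
    rwa [he] at h
  have e1 : ∑' k, (A k * ψ k - f x * ψ k) = (∑' k, A k * ψ k) - ∑' k, f x * ψ k :=
    Summable.tsum_sub hAψ_sum hfψ_sum
  have e2 : ∑' k, f x * ψ k = f x := by rw [tsum_mul_left, hψ_tsum, mul_one]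
  have hMf : M α β n f x - f x = ∑' k, (A k * ψ k - f x * ψ k) := by
    rw [hM, e1, e2]
  rw [hMf]
  have step1 : |∑' k, (A k * ψ k - f x * ψ k)| ≤ ∑' k, |A k * ψ k - f x * ψ k| := by
    have h := norm_tsum_le_tsum_norm (f := fun k => A k * ψ k - f x * ψ k)
      (by simpa only [Real.norm_eq_abs] using hDabs_sum)
    simpa only [Real.norm_eq_abs] using h
  have step2 : ∑' k, |A k * ψ k - f x * ψ k| ≤ ∑' k, ω * (2 + (n:ℝ) * T k) * ψ k :=
    Summable.tsum_le_tsum hbound hDabs_sum hbnd_sum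
  have step3 : ∑' k, ω * (2 + (n:ℝ) * T k) * ψ k
      = 2 * ω + (ω * n) * ((1 / ((n:ℝ) - β) ^ 2) * ((n:ℝ) * x) ^ 2
        + ((2 * α + 4) / ((n:ℝ) - β) ^ 2 - 2 * x / ((n:ℝ) - β)) * ((n:ℝ) * x)
        + ((α + 1) * (α + 2) / ((n:ℝ) - β) ^ 2 - 2 * x * (α + 1) / ((n:ℝ) - β) + x ^ 2)) := by
    rw [hbnd_fun, Summable.tsum_add (hψ_sum.mul_left _) (hTψ_sum.mul_left _), tsum_mul_left,
      tsum_mul_left, hψ_tsum, hTψ_tsum, mul_one]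
  calc |∑' k, (A k * ψ k - f x * ψ k)| ≤ ∑' k, |A k * ψ k - f x * ψ k| := step1
    _ ≤ ∑' k, ω * (2 + (n:ℝ) * T k) * ψ k := step2
    _ = _ := by rw [step3]; ring


set_option maxHeartbeats 1000000 in
/-- Quantitative estimate on compact intervals:
`sup_{x∈[0,a]} |M_n^{(α,β)}f(x) − f(x)| ≤ C ω(f, n^{−1/2})`. -/
theorem stmt_12 (α β : ℝ) (hα : -1 < α) (hβ : 0 ≤ β) (a : ℝ) (ha : 0 < a) :
    ∃ C > (0 : ℝ), ∃ N : ℕ, ∀ f : ℝ → ℝ,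
      (∃ B : ℝ, ∀ t : ℝ, 0 ≤ t → |f t| ≤ B) →
      UniformContinuousOn f (Set.Ici 0) →
      ∀ n : ℕ, N ≤ n → β < n → ∀ x ∈ Set.Icc (0 : ℝ) a,
        |M α β n f x - f x| ≤ C * omega f ((n : ℝ) ^ (-(1 : ℝ) / 2)) := by
  have hα1 : (0:ℝ) < α + 1 := by linarith
  have hα2 : (0:ℝ) < α + 2 := by linarith
  have hKnn : 0 ≤ β ^ 2 * a ^ 2 + 2 * (α + 1) * β * a + (α + 1) * (α + 2) := by
    have h1 : (0:ℝ) ≤ β ^ 2 * a ^ 2 := by positivity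
    have h2 : (0:ℝ) ≤ 2 * (α + 1) * β * a := by positivity
    have h3 : (0:ℝ) < (α + 1) * (α + 2) := mul_pos hα1 hα2
    linarith
  refine ⟨2 + 4 * (β ^ 2 * a ^ 2 + 2 * (α + 1) * β * a + (α + 1) * (α + 2)) + 8 * a,
    by linarith, max 2 ⌈2 * β⌉₊, ?_⟩
  intro f hfB hfc n hnN hβn x hx
  obtain ⟨B, hB⟩ := hfB
  obtain ⟨hx0, hxa⟩ := hx
  have hn2 : (2:ℕ) ≤ n := le_trans (le_max_left _ _) hnN
  have hn1 : (1:ℝ) ≤ (n:ℝ) := by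
    have : (1:ℕ) ≤ n := by omega
    exact_mod_cast this
  have h2β : 2 * β ≤ (n:ℝ) := by
    have h1 : (⌈2 * β⌉₊ : ℝ) ≤ n := by exact_mod_cast le_trans (le_max_right 2 _) hnN
    exact (Nat.le_ceil _).trans h1
  have hc : (0:ℝ) < (n:ℝ) - β := sub_pos.mpr hβn
  have hfm : AEStronglyMeasurable f (volume.restrict (Ioi 0)) :=
    ((hfc.continuousOn).mono Set.Ioi_subset_Ici_self).aestronglyMeasurable measurableSet_Ioi
  have hωnn : 0 ≤ omega f ((n:ℝ) ^ (-(1:ℝ) / 2)) :=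
    omega_nonneg hB (Real.rpow_nonneg (by positivity) _)
  refine (key α β hα f B hB hfm n hn1 hβn x hx0).trans ?_
  refine mul_le_mul_of_nonneg_right ?_ hωnn
  have hSval_eq : (1 / ((n:ℝ) - β) ^ 2) * ((n:ℝ) * x) ^ 2
      + ((2 * α + 4) / ((n:ℝ) - β) ^ 2 - 2 * x / ((n:ℝ) - β)) * ((n:ℝ) * x)
      + ((α + 1) * (α + 2) / ((n:ℝ) - β) ^ 2 - 2 * x * (α + 1) / ((n:ℝ) - β) + x ^ 2)
      = (β ^ 2 * x ^ 2 + 2 * ((n:ℝ) + (α + 1) * β) * x + (α + 1) * (α + 2)) / ((n:ℝ) - β) ^ 2 := by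
    field_simp
    ring
  rw [hSval_eq]
  have hcoef : (0:ℝ) ≤ (n:ℝ) + (α + 1) * β := by positivity
  have hnum_nn : (0:ℝ) ≤ β ^ 2 * x ^ 2 + 2 * ((n:ℝ) + (α + 1) * β) * x + (α + 1) * (α + 2) := by
    have h1 : (0:ℝ) ≤ β ^ 2 * x ^ 2 := by positivity
    have h2 : (0:ℝ) ≤ 2 * ((n:ℝ) + (α + 1) * β) * x := by positivity
    nlinarith [mul_pos hα1 hα2]
  have hnum_le : β ^ 2 * x ^ 2 + 2 * ((n:ℝ) + (α + 1) * β) * x + (α + 1) * (α + 2)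
      ≤ (β ^ 2 * a ^ 2 + 2 * (α + 1) * β * a + (α + 1) * (α + 2)) + 2 * (n:ℝ) * a := by
    have t1 : β ^ 2 * x ^ 2 ≤ β ^ 2 * a ^ 2 := by
      have hh : (0:ℝ) ≤ β ^ 2 * ((a - x) * (a + x)) :=
        mul_nonneg (sq_nonneg β) (mul_nonneg (by linarith) (by linarith))
      nlinarith [hh]
    have t2 : 2 * ((n:ℝ) + (α + 1) * β) * x ≤ 2 * ((n:ℝ) + (α + 1) * β) * a := by nlinarith
    have t3 : 2 * ((n:ℝ) + (α + 1) * β) * a = 2 * (n:ℝ) * a + 2 * (α + 1) * β * a := by ring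
    linarith
  have hhalf : (n:ℝ) / 2 ≤ (n:ℝ) - β := by linarith
  have hden : (n:ℝ) ^ 2 / 4 ≤ ((n:ℝ) - β) ^ 2 := by nlinarith
  have h1 : (β ^ 2 * x ^ 2 + 2 * ((n:ℝ) + (α + 1) * β) * x + (α + 1) * (α + 2)) / ((n:ℝ) - β) ^ 2
      ≤ ((β ^ 2 * a ^ 2 + 2 * (α + 1) * β * a + (α + 1) * (α + 2)) + 2 * (n:ℝ) * a)
        / ((n:ℝ) ^ 2 / 4) :=
    div_le_div₀ (by nlinarith) hnum_le (by positivity) hden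
  have h2 : ((β ^ 2 * a ^ 2 + 2 * (α + 1) * β * a + (α + 1) * (α + 2)) + 2 * (n:ℝ) * a)
        / ((n:ℝ) ^ 2 / 4)
      = 4 * (β ^ 2 * a ^ 2 + 2 * (α + 1) * β * a + (α + 1) * (α + 2)) / (n:ℝ) ^ 2
        + 8 * a / (n:ℝ) := by
    have hne : (n:ℝ) ≠ 0 := by positivity
    field_simp
    ring
  have h3 : (n:ℝ) * ((β ^ 2 * x ^ 2 + 2 * ((n:ℝ) + (α + 1) * β) * x + (α + 1) * (α + 2))
        / ((n:ℝ) - β) ^ 2)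
      ≤ (n:ℝ) * (4 * (β ^ 2 * a ^ 2 + 2 * (α + 1) * β * a + (α + 1) * (α + 2)) / (n:ℝ) ^ 2
        + 8 * a / (n:ℝ)) :=
    mul_le_mul_of_nonneg_left (h1.trans h2.le) (by positivity)
  have h4 : (n:ℝ) * (4 * (β ^ 2 * a ^ 2 + 2 * (α + 1) * β * a + (α + 1) * (α + 2)) / (n:ℝ) ^ 2
        + 8 * a / (n:ℝ))
      = 4 * (β ^ 2 * a ^ 2 + 2 * (α + 1) * β * a + (α + 1) * (α + 2)) / (n:ℝ) + 8 * a := by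
    have hne : (n:ℝ) ≠ 0 := by positivity
    field_simp
  have h5 : 4 * (β ^ 2 * a ^ 2 + 2 * (α + 1) * β * a + (α + 1) * (α + 2)) / (n:ℝ)
      ≤ 4 * (β ^ 2 * a ^ 2 + 2 * (α + 1) * β * a + (α + 1) * (α + 2)) :=
    div_le_self (by linarith) hn1
  linarith
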